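/- Let d ≥ 2, let A be a real d×d matrix, r ≥ 0, let μ be a Borel probability measure on [−r,0], and let x : [−r,∞) → ℝ^d be continuous, differentiable on (0,∞), with x(t) ∈ Δ_d for all t ≥ −r, satisfying the distributed-delay replicator equation x_i′(t) = x_i(t)·[(A x̄(t))_i − ⟨x(t), A x̄(t)⟩] for all t > 0 and all i ∈ {1,…,d}, where x̄(t) = ∫_{−r}^0 x(t+s) dμ(s). Assume there exists ε > 0 such that x_i(t) ≥ ε for all t ≥ 0 and all i, and assume p ∈ Δ_d satisfies p_i > 0 for all i and (Ap)_1 = (Ap)_2 = ⋯ = (Ap)_d, and that p is the unique such point of Δ_d. Then for every i, lim_{T→∞} (1/T)∫₀^T x_i(t) dt = p_i. -/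

import Mathlib

open Filter MeasureTheory

open Set intervalIntegral

section Aux

variable {d : ℕ}

lemma xb {x : ℝ → Fin d → ℝ} {r : ℝ}
    (hxs : ∀ t : ℝ, -r ≤ t → x t ∈ stdSimplex ℝ (Fin d)) {t : ℝ} (ht : -r ≤ t) (i : Fin d) :
    0 ≤ x t i ∧ x t i ≤ 1 := by
  refine ⟨(hxs t ht).1 i, ?_⟩
  have h1 := (hxs t ht).2
  calc x t i ≤ ∑ j, x t j := Finset.single_le_sum (fun j _ => (hxs t ht).1 j) (Finset.mem_univ i)
  _ = 1 := h1

lemma xnorm {x : ℝ → Fin d → ℝ} {r : ℝ}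
    (hxs : ∀ t : ℝ, -r ≤ t → x t ∈ stdSimplex ℝ (Fin d)) {t : ℝ} (ht : -r ≤ t) :
    ‖x t‖ ≤ 1 := by
  rw [pi_norm_le_iff_of_nonneg zero_le_one]
  intro i
  rw [Real.norm_eq_abs, abs_le]
  exact ⟨by linarith [(xb hxs ht i).1], (xb hxs ht i).2⟩

-- integrability of s ↦ x (t+s) w.r.t. μ.restrict (Icc (-r) 0), for t ≥ 0
lemma xint {x : ℝ → Fin d → ℝ} {r : ℝ} (hr : 0 ≤ r) {μ : Measure ℝ} [IsProbabilityMeasure μ]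
    (hxcont : ContinuousOn x (Set.Ici (-r)))
    (hxs : ∀ t : ℝ, -r ≤ t → x t ∈ stdSimplex ℝ (Fin d)) {t : ℝ} (ht : 0 ≤ t) :
    Integrable (fun s => x (t + s)) (μ.restrict (Icc (-r) 0)) := by
  have hmaps : MapsTo (fun s => t + s) (Icc (-r) 0) (Ici (-r)) := by
    intro s hs; simp only [mem_Ici]; have := hs.1; simp only [mem_Icc] at hs; linarith [hs.1]
  have hc : ContinuousOn (fun s => x (t + s)) (Icc (-r) 0) :=
    hxcont.comp ((continuous_const.add continuous_id).continuousOn) hmaps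
  refine Integrable.mono' (integrable_const 1) (hc.aestronglyMeasurable measurableSet_Icc) ?_
  filter_upwards [ae_restrict_mem measurableSet_Icc] with s hs
  exact xnorm hxs (by simp only [mem_Icc] at hs; linarith [hs.1])

lemma gapply {x : ℝ → Fin d → ℝ} {r : ℝ} (hr : 0 ≤ r) {μ : Measure ℝ} [IsProbabilityMeasure μ]
    (hxcont : ContinuousOn x (Set.Ici (-r)))
    (hxs : ∀ t : ℝ, -r ≤ t → x t ∈ stdSimplex ℝ (Fin d)) {t : ℝ} (ht : 0 ≤ t) (k : Fin d) :
    (∫ s in Icc (-r) (0:ℝ), x (t + s) ∂μ) k = ∫ s in Icc (-r) (0:ℝ), x (t + s) k ∂μ :=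
  ((ContinuousLinearMap.proj (R := ℝ) (φ := fun _ : Fin d => ℝ) k).integral_comp_comm
    (xint hr hxcont hxs ht)).symm

lemma gcont {x : ℝ → Fin d → ℝ} {r : ℝ} (hr : 0 ≤ r) {μ : Measure ℝ} [IsProbabilityMeasure μ]
    (hxcont : ContinuousOn x (Set.Ici (-r)))
    (hxs : ∀ t : ℝ, -r ≤ t → x t ∈ stdSimplex ℝ (Fin d)) :
    ContinuousOn (fun t => ∫ s in Icc (-r) (0:ℝ), x (t + s) ∂μ) (Ici (0:ℝ)) := by
  apply continuousOn_of_dominated (bound := fun _ => (1:ℝ))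
  · intro t ht
    have hmaps : MapsTo (fun s => t + s) (Icc (-r) 0) (Ici (-r)) := by
      intro s hs; simp only [mem_Icc] at hs; simp only [mem_Ici] at ht ⊢; linarith [hs.1]
    exact (hxcont.comp ((continuous_const.add continuous_id).continuousOn)
      hmaps).aestronglyMeasurable measurableSet_Icc
  · intro t ht
    filter_upwards [ae_restrict_mem measurableSet_Icc] with s hs
    simp only [mem_Icc] at hs; simp only [mem_Ici] at ht
    exact xnorm hxs (by linarith [hs.1])
  · exact integrable_const 1
  · filter_upwards [ae_restrict_mem measurableSet_Icc] with s hs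
    simp only [mem_Icc] at hs
    have hmaps : MapsTo (fun t : ℝ => t + s) (Ici 0) (Ici (-r)) := by
      intro t ht; simp only [mem_Ici] at ht ⊢; linarith [hs.1]
    exact hxcont.comp ((continuous_id.add continuous_const).continuousOn) hmaps

lemma ftclog {x : ℝ → Fin d → ℝ} {r : ℝ} (hr : 0 ≤ r) {μ : Measure ℝ} [IsProbabilityMeasure μ]
    {A : Matrix (Fin d) (Fin d) ℝ}
    (hxcont : ContinuousOn x (Set.Ici (-r)))
    (hxs : ∀ t : ℝ, -r ≤ t → x t ∈ stdSimplex ℝ (Fin d))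
    (hode : ∀ t : ℝ, 0 < t →
      HasDerivAt x
        (fun i =>
          x t i *
            (A.mulVec (∫ s in Set.Icc (-r) (0:ℝ), x (t + s) ∂μ) i -
              ∑ k, x t k * A.mulVec (∫ s in Set.Icc (-r) (0:ℝ), x (t + s) ∂μ) k))
        t)
    {ε : ℝ} (hε : 0 < ε) (hint : ∀ t : ℝ, 0 ≤ t → ∀ i, ε ≤ x t i)
    {T : ℝ} (hT : 0 ≤ T) (i : Fin d) :
    ∫ t in (0:ℝ)..T, (A.mulVec (∫ s in Set.Icc (-r) (0:ℝ), x (t + s) ∂μ) i -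
        ∑ k, x t k * A.mulVec (∫ s in Set.Icc (-r) (0:ℝ), x (t + s) ∂μ) k)
      = Real.log (x T i) - Real.log (x 0 i) := by
  have hIci : Icc (0:ℝ) T ⊆ Ici (-r) := fun t ht => le_trans (by linarith) ht.1
  have hxc0 : ∀ j, ContinuousOn (fun t => x t j) (Ici (0:ℝ)) := fun j =>
    (continuous_apply j).comp_continuousOn (hxcont.mono (fun t ht => le_trans (by linarith : -r ≤ 0) ht))
  have hGc := gcont (μ := μ) hr hxcont hxs
  have hAG : ∀ j, ContinuousOn
      (fun t => A.mulVec (∫ s in Set.Icc (-r) (0:ℝ), x (t + s) ∂μ) j) (Ici (0:ℝ)) := by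
    intro j
    have : (fun t => A.mulVec (∫ s in Set.Icc (-r) (0:ℝ), x (t + s) ∂μ) j)
        = fun t => ∑ k, A j k * (∫ s in Set.Icc (-r) (0:ℝ), x (t + s) ∂μ) k := by
      funext t; simp [Matrix.mulVec, dotProduct]
    rw [this]
    exact continuousOn_finset_sum _ fun k _ =>
      continuousOn_const.mul ((continuous_apply k).comp_continuousOn hGc)
  have hcc : ContinuousOn (fun t =>
      A.mulVec (∫ s in Set.Icc (-r) (0:ℝ), x (t + s) ∂μ) i -
        ∑ k, x t k * A.mulVec (∫ s in Set.Icc (-r) (0:ℝ), x (t + s) ∂μ) k) (Ici (0:ℝ)) :=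
    (hAG i).sub (continuousOn_finset_sum _ fun k _ => (hxc0 k).mul (hAG k))
  apply integral_eq_sub_of_hasDeriv_right_of_le hT
  · exact ContinuousOn.log ((hxc0 i).mono Icc_subset_Ici_self)
      (fun t ht => ne_of_gt (lt_of_lt_of_le hε (hint t ht.1 i)))
  · intro t ht
    have hxpos : x t i ≠ 0 := ne_of_gt (lt_of_lt_of_le hε (hint t ht.1.le i))
    have hd := (hasDerivAt_pi.1 (hode t ht.1)) i
    have := hd.log hxpos
    convert this.hasDerivWithinAt using 1
    field_simp
  · exact (hcc.mono (by rw [uIcc_of_le hT]; exact Icc_subset_Ici_self)).intervalIntegrable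

lemma fub {x : ℝ → Fin d → ℝ} {r : ℝ} (hr : 0 ≤ r) {μ : Measure ℝ} [IsProbabilityMeasure μ]
    (hμ : μ (Set.Icc (-r) 0) = 1)
    (hxcont : ContinuousOn x (Set.Ici (-r)))
    (hxs : ∀ t : ℝ, -r ≤ t → x t ∈ stdSimplex ℝ (Fin d))
    {T : ℝ} (hT : 0 ≤ T) (k : Fin d) :
    |(∫ t in (0:ℝ)..T, (∫ s in Set.Icc (-r) (0:ℝ), x (t + s) ∂μ) k)
      - ∫ t in (0:ℝ)..T, x t k| ≤ 2 * r := by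
  set ν := μ.restrict (Icc (-r) 0) with hν
  haveI hνprob : IsProbabilityMeasure ν := ⟨by rw [hν, Measure.restrict_apply_univ]; exact hμ⟩
  set J := ∫ t in (0:ℝ)..T, x t k with hJ
  -- integrability on the product
  have hmaps : MapsTo (fun z : ℝ × ℝ => z.1 + z.2) (Ioc 0 T ×ˢ Icc (-r) 0) (Ici (-r)) := by
    rintro ⟨t, s⟩ ⟨ht, hs⟩
    simp only [mem_Ioc] at ht; simp only [mem_Icc] at hs
    simp only [mem_Ici]; linarith [ht.1, hs.1]
  have hc : ContinuousOn (fun z : ℝ × ℝ => x (z.1 + z.2) k) (Ioc 0 T ×ˢ Icc (-r) 0) :=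
    (continuous_apply k).comp_continuousOn
      (hxcont.comp (continuous_fst.add continuous_snd).continuousOn hmaps)
  have hprodmeas : (volume.restrict (Ioc (0:ℝ) T)).prod ν
      = (volume.prod μ).restrict (Ioc 0 T ×ˢ Icc (-r) 0) := Measure.prod_restrict _ _
  have hF : Integrable (fun z : ℝ × ℝ => x (z.1 + z.2) k)
      ((volume.restrict (Ioc (0:ℝ) T)).prod ν) := by
    refine Integrable.mono' (integrable_const 1) ?_ ?_
    · rw [hprodmeas]
      exact hc.aestronglyMeasurable (measurableSet_Ioc.prod measurableSet_Icc)
    · rw [hprodmeas]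
      filter_upwards [ae_restrict_mem (measurableSet_Ioc.prod measurableSet_Icc)] with z hz
      have := hmaps hz
      rw [Real.norm_eq_abs, abs_le]
      exact ⟨by linarith [(xb hxs this k).1], (xb hxs this k).2⟩
  -- LHS equals iterated integral
  have hLHS : (∫ t in (0:ℝ)..T, (∫ s in Set.Icc (-r) (0:ℝ), x (t + s) ∂μ) k)
      = ∫ t in Ioc (0:ℝ) T, (∫ s, x (t + s) k ∂ν) := by
    rw [intervalIntegral.integral_of_le hT]
    refine setIntegral_congr_fun measurableSet_Ioc fun t ht => ?_
    exact gapply hr hxcont hxs ht.1.le k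
  -- swap
  have hswap : (∫ t in Ioc (0:ℝ) T, (∫ s, x (t + s) k ∂ν))
      = ∫ s, (∫ t in Ioc (0:ℝ) T, x (t + s) k) ∂ν :=
    MeasureTheory.integral_integral_swap hF
  -- inner section estimate
  have hxck : ContinuousOn (fun u => x u k) (Ici (-r)) :=
    (continuous_apply k).comp_continuousOn hxcont
  have hxkI : ∀ {a b : ℝ}, -r ≤ a → -r ≤ b → IntervalIntegrable (fun u => x u k) volume a b := by
    intro a b ha hb
    apply (hxck.mono ?_).intervalIntegrable
    intro u hu
    exact le_trans (le_min ha hb) hu.1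
  have hnorm1 : ∀ {u : ℝ}, -r ≤ u → ‖x u k‖ ≤ 1 := by
    intro u hu
    rw [Real.norm_eq_abs, abs_le]
    exact ⟨by linarith [(xb hxs hu k).1], (xb hxs hu k).2⟩
  have hinner : ∀ s ∈ Icc (-r) (0:ℝ), ‖(∫ t in Ioc (0:ℝ) T, x (t + s) k) - J‖ ≤ 2 * r := by
    intro s hs
    simp only [mem_Icc] at hs
    have h1 : (∫ t in Ioc (0:ℝ) T, x (t + s) k) = ∫ t in (0:ℝ)..T, x (t + s) k :=
      (intervalIntegral.integral_of_le hT).symm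
    have h2 : (∫ t in (0:ℝ)..T, x (t + s) k) = ∫ u in s..(T + s), x u k := by
      have := intervalIntegral.integral_comp_add_right (a := (0:ℝ)) (b := T)
        (f := fun u => x u k) s
      rwa [zero_add] at this
    have hTs : -r ≤ T + s := by linarith
    have ha : (∫ u in s..(0:ℝ), x u k) + (∫ u in (0:ℝ)..(T+s), x u k) = ∫ u in s..(T+s), x u k :=
      intervalIntegral.integral_add_adjacent_intervals (hxkI hs.1 (by linarith))
        (hxkI (by linarith) hTs)
    have hb : (∫ u in (0:ℝ)..T, x u k) + (∫ u in T..(T+s), x u k) = ∫ u in (0:ℝ)..(T+s), x u k :=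
      intervalIntegral.integral_add_adjacent_intervals (hxkI (by linarith) (by linarith))
        (hxkI (by linarith) hTs)
    have e1 : ‖∫ u in s..(0:ℝ), x u k‖ ≤ r := by
      have := intervalIntegral.norm_integral_le_of_norm_le_const (C := 1)
        (f := fun u => x u k) (a := s) (b := 0) (fun u hu => hnorm1 (by
          rcases hu with ⟨h1u, h2u⟩
          have : min s 0 < u := h1u
          rw [min_eq_left hs.2] at this
          linarith [hs.1]))
      calc ‖∫ u in s..(0:ℝ), x u k‖ ≤ 1 * |0 - s| := this
      _ = |s| := by rw [one_mul, zero_sub, abs_neg]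
      _ ≤ r := abs_le.2 ⟨by linarith, by linarith⟩
    have e2 : ‖∫ u in T..(T+s), x u k‖ ≤ r := by
      have := intervalIntegral.norm_integral_le_of_norm_le_const (C := 1)
        (f := fun u => x u k) (a := T) (b := T + s) (fun u hu => hnorm1 (by
          rcases hu with ⟨h1u, h2u⟩
          have hmin : min T (T + s) = T + s := min_eq_right (by linarith)
          rw [hmin] at h1u
          linarith))
      calc ‖∫ u in T..(T+s), x u k‖ ≤ 1 * |T + s - T| := this
      _ = |s| := by rw [one_mul]; ring_nf
      _ ≤ r := abs_le.2 ⟨by linarith, by linarith⟩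
    have key : (∫ t in Ioc (0:ℝ) T, x (t + s) k) - J
        = (∫ u in s..(0:ℝ), x u k) + (∫ u in T..(T+s), x u k) := by
      rw [h1, h2, hJ]
      have := ha
      have := hb
      linarith [ha, hb]
    rw [key]
    calc ‖(∫ u in s..(0:ℝ), x u k) + (∫ u in T..(T+s), x u k)‖
        ≤ ‖∫ u in s..(0:ℝ), x u k‖ + ‖∫ u in T..(T+s), x u k‖ := norm_add_le _ _
    _ ≤ r + r := add_le_add e1 e2
    _ = 2 * r := by ring
  -- outer estimate
  have hIint : Integrable (fun s => ∫ t in Ioc (0:ℝ) T, x (t + s) k) ν := by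
    have := hF.integral_prod_right
    simpa using this
  have houter : ‖(∫ s, (∫ t in Ioc (0:ℝ) T, x (t + s) k) ∂ν) - J‖ ≤ 2 * r := by
    have hsub : (∫ s, (∫ t in Ioc (0:ℝ) T, x (t + s) k) ∂ν) - J
        = ∫ s, ((∫ t in Ioc (0:ℝ) T, x (t + s) k) - J) ∂ν := by
      rw [integral_sub hIint (integrable_const J), MeasureTheory.integral_const, probReal_univ]
      simp
    rw [hsub]
    have := norm_integral_le_of_norm_le_const (μ := ν) (C := 2 * r)
      (f := fun s => (∫ t in Ioc (0:ℝ) T, x (t + s) k) - J) ?_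
    · simpa [measure_univ] using this
    · filter_upwards [ae_restrict_mem measurableSet_Icc] with s hs
      exact hinner s hs
  rw [hLHS, hswap, ← Real.norm_eq_abs]
  exact houter

lemma AGcont {x : ℝ → Fin d → ℝ} {r : ℝ} (hr : 0 ≤ r) {μ : Measure ℝ} [IsProbabilityMeasure μ]
    {A : Matrix (Fin d) (Fin d) ℝ}
    (hxcont : ContinuousOn x (Set.Ici (-r)))
    (hxs : ∀ t : ℝ, -r ≤ t → x t ∈ stdSimplex ℝ (Fin d)) (j : Fin d) :
    ContinuousOn (fun t => A.mulVec (∫ s in Set.Icc (-r) (0:ℝ), x (t + s) ∂μ) j)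
      (Ici (0:ℝ)) := by
  have hGc := gcont (μ := μ) hr hxcont hxs
  have : (fun t => A.mulVec (∫ s in Set.Icc (-r) (0:ℝ), x (t + s) ∂μ) j)
      = fun t => ∑ k, A j k * (∫ s in Set.Icc (-r) (0:ℝ), x (t + s) ∂μ) k := by
    funext t; simp [Matrix.mulVec, dotProduct]
  rw [this]
  exact continuousOn_finset_sum _ fun k _ =>
    continuousOn_const.mul ((continuous_apply k).comp_continuousOn hGc)

lemma keybound {x : ℝ → Fin d → ℝ} {r : ℝ} (hr : 0 ≤ r) {μ : Measure ℝ} [IsProbabilityMeasure μ]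
    {A : Matrix (Fin d) (Fin d) ℝ}
    (hμ : μ (Set.Icc (-r) 0) = 1)
    (hxcont : ContinuousOn x (Set.Ici (-r)))
    (hxs : ∀ t : ℝ, -r ≤ t → x t ∈ stdSimplex ℝ (Fin d))
    (hode : ∀ t : ℝ, 0 < t →
      HasDerivAt x
        (fun i =>
          x t i *
            (A.mulVec (∫ s in Set.Icc (-r) (0:ℝ), x (t + s) ∂μ) i -
              ∑ k, x t k * A.mulVec (∫ s in Set.Icc (-r) (0:ℝ), x (t + s) ∂μ) k))
        t)
    {ε : ℝ} (hε : 0 < ε) (hint : ∀ t : ℝ, 0 ≤ t → ∀ i, ε ≤ x t i)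
    {T : ℝ} (hT : 0 ≤ T) (i j : Fin d) :
    |A.mulVec (fun k => ∫ t in (0:ℝ)..T, x t k) i -
      A.mulVec (fun k => ∫ t in (0:ℝ)..T, x t k) j|
      ≤ 4 * |Real.log ε| + 2 * r * ((∑ k, |A i k|) + ∑ k, |A j k|) := by
  have hIccsub : Icc (0:ℝ) T ⊆ Ici (-r) := fun t ht => le_trans (by linarith) ht.1
  have huIcc : uIcc (0:ℝ) T ⊆ Ici (0:ℝ) := by
    rw [uIcc_of_le hT]; exact Icc_subset_Ici_self
  have hxc0 : ∀ k : Fin d, ContinuousOn (fun t => x t k) (Ici (0:ℝ)) := fun k =>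
    (continuous_apply k).comp_continuousOn (hxcont.mono fun t ht => le_trans (by linarith : -r ≤ 0) ht)
  -- interval integrability of the pieces
  have hAGI : ∀ m : Fin d, IntervalIntegrable
      (fun t => A.mulVec (∫ s in Set.Icc (-r) (0:ℝ), x (t + s) ∂μ) m) volume 0 T :=
    fun m => ((AGcont hr hxcont hxs m).mono huIcc).intervalIntegrable
  have hcI : IntervalIntegrable
      (fun t => ∑ k, x t k * A.mulVec (∫ s in Set.Icc (-r) (0:ℝ), x (t + s) ∂μ) k)
      volume 0 T :=
    ((continuousOn_finset_sum _ fun k _ => (hxc0 k).mul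
      (AGcont hr hxcont hxs k)).mono huIcc).intervalIntegrable
  -- step (b): log bound on ∫ (AG i - AG j)
  have hlogb : ∀ t : ℝ, 0 ≤ t → ∀ m : Fin d, |Real.log (x t m)| ≤ |Real.log ε| := by
    intro t ht m
    have h1 : ε ≤ x t m := hint t ht m
    have h2 : x t m ≤ 1 := (xb hxs (le_trans (by linarith) ht) m).2
    have hl1 : Real.log (x t m) ≤ 0 := Real.log_nonpos (by linarith) h2
    have hl2 : Real.log ε ≤ Real.log (x t m) := Real.log_le_log (by linarith) h1
    have hε1 : Real.log ε ≤ 0 := le_trans hl2 hl1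
    rw [abs_of_nonpos hl1, abs_of_nonpos hε1]
    linarith
  have hABint : |∫ t in (0:ℝ)..T,
      (A.mulVec (∫ s in Set.Icc (-r) (0:ℝ), x (t + s) ∂μ) i -
        A.mulVec (∫ s in Set.Icc (-r) (0:ℝ), x (t + s) ∂μ) j)| ≤ 4 * |Real.log ε| := by
    have hsplit : (∫ t in (0:ℝ)..T,
        (A.mulVec (∫ s in Set.Icc (-r) (0:ℝ), x (t + s) ∂μ) i -
          A.mulVec (∫ s in Set.Icc (-r) (0:ℝ), x (t + s) ∂μ) j))
        = (∫ t in (0:ℝ)..T,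
            (A.mulVec (∫ s in Set.Icc (-r) (0:ℝ), x (t + s) ∂μ) i -
              ∑ k, x t k * A.mulVec (∫ s in Set.Icc (-r) (0:ℝ), x (t + s) ∂μ) k))
          - (∫ t in (0:ℝ)..T,
            (A.mulVec (∫ s in Set.Icc (-r) (0:ℝ), x (t + s) ∂μ) j -
              ∑ k, x t k * A.mulVec (∫ s in Set.Icc (-r) (0:ℝ), x (t + s) ∂μ) k)) := by
      rw [← intervalIntegral.integral_sub ((hAGI i).sub hcI) ((hAGI j).sub hcI)]
      congr 1
      funext t
      ring
    rw [hsplit, ftclog hr hxcont hxs hode hε hint hT i, ftclog hr hxcont hxs hode hε hint hT j]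
    have b1 := hlogb T hT i
    have b2 := hlogb 0 le_rfl i
    have b3 := hlogb T hT j
    have b4 := hlogb 0 le_rfl j
    have := abs_nonneg (Real.log ε)
    rw [abs_le] at b1 b2 b3 b4 ⊢
    constructor <;> [nlinarith; nlinarith]
  -- step (c,d): replace ∫ AG by A.mulVec of v
  have hcomp : ∀ m : Fin d,
      |(∫ t in (0:ℝ)..T, A.mulVec (∫ s in Set.Icc (-r) (0:ℝ), x (t + s) ∂μ) m)
        - A.mulVec (fun k => ∫ t in (0:ℝ)..T, x t k) m| ≤ 2 * r * ∑ k, |A m k| := by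
    intro m
    have hGkI : ∀ k : Fin d, IntervalIntegrable
        (fun t => (∫ s in Set.Icc (-r) (0:ℝ), x (t + s) ∂μ) k) volume 0 T :=
      fun k => (((continuous_apply k).comp_continuousOn
        (gcont (μ := μ) hr hxcont hxs)).mono huIcc).intervalIntegrable
    have h1 : (∫ t in (0:ℝ)..T, A.mulVec (∫ s in Set.Icc (-r) (0:ℝ), x (t + s) ∂μ) m)
        = ∑ k, A m k * ∫ t in (0:ℝ)..T, (∫ s in Set.Icc (-r) (0:ℝ), x (t + s) ∂μ) k := by
      have : (fun t => A.mulVec (∫ s in Set.Icc (-r) (0:ℝ), x (t + s) ∂μ) m)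
          = fun t => ∑ k, A m k * (∫ s in Set.Icc (-r) (0:ℝ), x (t + s) ∂μ) k := by
        funext t; simp [Matrix.mulVec, dotProduct]
      rw [this, intervalIntegral.integral_finset_sum]
      · exact Finset.sum_congr rfl fun k _ => intervalIntegral.integral_const_mul _ _
      · exact fun k _ => (hGkI k).const_mul _
    have h2 : A.mulVec (fun k => ∫ t in (0:ℝ)..T, x t k) m
        = ∑ k, A m k * ∫ t in (0:ℝ)..T, x t k := by
      simp [Matrix.mulVec, dotProduct]
    rw [h1, h2, ← Finset.sum_sub_distrib]
    calc |∑ k, (A m k * (∫ t in (0:ℝ)..T, (∫ s in Set.Icc (-r) (0:ℝ), x (t + s) ∂μ) k)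
            - A m k * ∫ t in (0:ℝ)..T, x t k)|
        ≤ ∑ k, |A m k * (∫ t in (0:ℝ)..T, (∫ s in Set.Icc (-r) (0:ℝ), x (t + s) ∂μ) k)
            - A m k * ∫ t in (0:ℝ)..T, x t k| := Finset.abs_sum_le_sum_abs _ _
    _ ≤ ∑ k, |A m k| * (2 * r) := by
        apply Finset.sum_le_sum
        intro k _
        rw [← mul_sub, abs_mul]
        exact mul_le_mul_of_nonneg_left (fub hr hμ hxcont hxs hT k) (abs_nonneg _)
    _ = 2 * r * ∑ k, |A m k| := by rw [← Finset.sum_mul]; ring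
  have t1 := hcomp i
  have t2 := hcomp j
  have hABint' := hABint
  have hsplit2 : (∫ t in (0:ℝ)..T,
      (A.mulVec (∫ s in Set.Icc (-r) (0:ℝ), x (t + s) ∂μ) i -
        A.mulVec (∫ s in Set.Icc (-r) (0:ℝ), x (t + s) ∂μ) j))
      = (∫ t in (0:ℝ)..T, A.mulVec (∫ s in Set.Icc (-r) (0:ℝ), x (t + s) ∂μ) i)
        - ∫ t in (0:ℝ)..T, A.mulVec (∫ s in Set.Icc (-r) (0:ℝ), x (t + s) ∂μ) j :=
    intervalIntegral.integral_sub (hAGI i) (hAGI j)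
  rw [hsplit2] at hABint'
  rw [abs_le] at t1 t2 hABint' ⊢
  constructor <;> [linarith; linarith]

end Aux

/-- Time-averaging for the distributed-delay replicator equation: if an
interior solution of `xᵢ'(t) = xᵢ(t)[(A x̄(t))ᵢ − ⟨x(t), A x̄(t)⟩]`, where
`x̄(t) = ∫_{−r}^0 x(t+s) dμ(s)` for a Borel probability measure `μ` on `[−r,0]`, stays
bounded away from the boundary of the simplex and `p` is the unique interior rest point of
the replicator ODE, then the time averages `(1/T)∫₀^T xᵢ(t) dt` converge to `pᵢ`. -/
theorem stmt_9 (d : ℕ) (hd : 2 ≤ d) (A : Matrix (Fin d) (Fin d) ℝ) (r : ℝ) (hr : 0 ≤ r)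
    (μ : Measure ℝ) [IsProbabilityMeasure μ] (hμ : μ (Set.Icc (-r) 0) = 1)
    (x : ℝ → Fin d → ℝ)
    (hxcont : ContinuousOn x (Set.Ici (-r)))
    (hxsimplex : ∀ t : ℝ, -r ≤ t → x t ∈ stdSimplex ℝ (Fin d))
    (hode : ∀ t : ℝ, 0 < t →
      HasDerivAt x
        (fun i =>
          x t i *
            (A.mulVec (∫ s in Set.Icc (-r) (0:ℝ), x (t + s) ∂μ) i -
              ∑ k, x t k * A.mulVec (∫ s in Set.Icc (-r) (0:ℝ), x (t + s) ∂μ) k))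
        t)
    (ε : ℝ) (hε : 0 < ε) (hint : ∀ t : ℝ, 0 ≤ t → ∀ i, ε ≤ x t i)
    (p : Fin d → ℝ) (hp : p ∈ stdSimplex ℝ (Fin d)) (hppos : ∀ i, 0 < p i)
    (hpeq : ∀ i j, A.mulVec p i = A.mulVec p j)
    (hpuniq : ∀ q ∈ stdSimplex ℝ (Fin d),
      (∀ i, 0 < q i) → (∀ i j, A.mulVec q i = A.mulVec q j) → q = p) :
    ∀ i, Tendsto (fun T : ℝ => T⁻¹ * ∫ t in (0:ℝ)..T, x t i) atTop (nhds (p i)) := by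
  classical
  set Y : ℝ → Fin d → ℝ := fun T k => T⁻¹ * ∫ t in (0:ℝ)..T, x t k with hYdef
  have hxc0 : ∀ k : Fin d, ContinuousOn (fun t => x t k) (Ici (0:ℝ)) := fun k =>
    (continuous_apply k).comp_continuousOn (hxcont.mono fun t ht => le_trans (by linarith : -r ≤ 0) ht)
  have hxI : ∀ (k : Fin d) {T : ℝ}, 0 ≤ T → IntervalIntegrable (fun t => x t k) volume 0 T := by
    intro k T hT
    apply ((hxc0 k).mono ?_).intervalIntegrable
    rw [uIcc_of_le hT]; exact Icc_subset_Ici_self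
  -- Y T is in the simplex and bounded below by ε for T > 0
  have hYε : ∀ {T : ℝ}, 0 < T → ∀ k, ε ≤ Y T k := by
    intro T hT k
    have hmono : ε * T ≤ ∫ t in (0:ℝ)..T, x t k := by
      have := intervalIntegral.integral_mono_on (f := fun _ => ε) (g := fun t => x t k)
        hT.le (intervalIntegrable_const) (hxI k hT.le) (fun t ht => hint t ht.1 k)
      simpa [mul_comm] using this
    have : T⁻¹ * (ε * T) ≤ T⁻¹ * ∫ t in (0:ℝ)..T, x t k :=
      mul_le_mul_of_nonneg_left hmono (inv_nonneg.2 hT.le)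
    calc ε = T⁻¹ * (ε * T) := by field_simp
    _ ≤ Y T k := this
  have hYsum : ∀ {T : ℝ}, 0 < T → ∑ k, Y T k = 1 := by
    intro T hT
    have h1 : ∑ k, ∫ t in (0:ℝ)..T, x t k = ∫ t in (0:ℝ)..T, ∑ k, x t k :=
      (intervalIntegral.integral_finset_sum fun k _ => hxI k hT.le).symm
    have h2 : (∫ t in (0:ℝ)..T, ∑ k, x t k) = ∫ t in (0:ℝ)..T, (1:ℝ) := by
      apply intervalIntegral.integral_congr
      intro t ht
      rw [uIcc_of_le hT.le] at ht
      exact (hxsimplex t (le_trans (by linarith) ht.1)).2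
    have : ∑ k, Y T k = T⁻¹ * ∑ k, ∫ t in (0:ℝ)..T, x t k := by
      rw [Finset.mul_sum]
    rw [this, h1, h2]
    simp only [_root_.intervalIntegral.integral_const, smul_eq_mul, mul_one, sub_zero]
    field_simp
  have hYmem : ∀ {T : ℝ}, 0 < T → Y T ∈ stdSimplex ℝ (Fin d) := fun {T} hT =>
    ⟨fun k => le_trans hε.le (hYε hT k), hYsum hT⟩
  -- the key asymptotic equalization bound
  have hmain : ∀ (i j : Fin d) {T : ℝ}, 0 < T →
      |A.mulVec (Y T) i - A.mulVec (Y T) j|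
        ≤ (4 * |Real.log ε| + 2 * r * ((∑ k, |A i k|) + ∑ k, |A j k|)) / T := by
    intro i j T hT
    have hmv : ∀ m : Fin d, A.mulVec (Y T) m
        = T⁻¹ * A.mulVec (fun k => ∫ t in (0:ℝ)..T, x t k) m := by
      intro m
      simp only [hYdef, Matrix.mulVec, dotProduct, Finset.mul_sum]
      exact Finset.sum_congr rfl fun k _ => by ring
    rw [hmv i, hmv j, ← mul_sub, abs_mul, abs_of_nonneg (inv_nonneg.2 hT.le),
      div_eq_inv_mul]
    exact mul_le_mul_of_nonneg_left
      (keybound hr hμ hxcont hxsimplex hode hε hint hT.le i j) (inv_nonneg.2 hT.le)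
  have htendsto0 : ∀ i j : Fin d,
      Tendsto (fun T => A.mulVec (Y T) i - A.mulVec (Y T) j) atTop (nhds 0) := by
    intro i j
    refine squeeze_zero_norm'
      (a := fun T => (4 * |Real.log ε| + 2 * r * ((∑ k, |A i k|) + ∑ k, |A j k|)) / T) ?_ ?_
    · filter_upwards [eventually_gt_atTop (0:ℝ)] with T hT
      simpa [Real.norm_eq_abs] using hmain i j hT
    · exact tendsto_const_nhds.div_atTop tendsto_id
  -- main convergence in the product space
  have hYp : Tendsto Y atTop (nhds p) := by
    apply tendsto_of_subseq_tendsto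
    intro ns hns
    obtain ⟨N, hN⟩ := eventually_atTop.1 (hns.eventually (eventually_ge_atTop (1:ℝ)))
    have hpos : ∀ n : ℕ, (0:ℝ) < ns (n + N) := fun n =>
      lt_of_lt_of_le one_pos (hN (n + N) (Nat.le_add_left N n))
    have hz : ∀ n : ℕ, Y (ns (n + N)) ∈ stdSimplex ℝ (Fin d) := fun n => hYmem (hpos n)
    obtain ⟨q, hqmem, φ, hφmono, hφtend⟩ := IsCompact.tendsto_subseq (isCompact_stdSimplex ℝ (Fin d)) hz
    have hT' : Tendsto (fun n => ns (φ n + N)) atTop atTop := by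
      exact hns.comp
        (tendsto_atTop_mono (fun n => Nat.le_add_right (φ n) N) hφmono.tendsto_atTop)
    have hqε : ∀ k, ε ≤ q k := by
      intro k
      have hk : Tendsto (fun n => Y (ns (φ n + N)) k) atTop (nhds (q k)) :=
        ((continuous_apply k).tendsto q).comp hφtend
      exact ge_of_tendsto hk (Eventually.of_forall fun n => hYε (hpos (φ n)) k)
    have hqeq : ∀ i j : Fin d, A.mulVec q i = A.mulVec q j := by
      intro i j
      have hcont : Continuous (fun v : Fin d → ℝ => A.mulVec v i - A.mulVec v j) := by
        have : (fun v : Fin d → ℝ => A.mulVec v i - A.mulVec v j)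
            = fun v => (∑ k, A i k * v k) - ∑ k, A j k * v k := by
          funext v; simp [Matrix.mulVec, dotProduct]
        rw [this]
        exact (continuous_finset_sum _ fun k _ => (continuous_const.mul
          (continuous_apply k))).sub
          (continuous_finset_sum _ fun k _ => continuous_const.mul (continuous_apply k))
      have l1 : Tendsto (fun n => A.mulVec (Y (ns (φ n + N))) i
          - A.mulVec (Y (ns (φ n + N))) j) atTop (nhds (A.mulVec q i - A.mulVec q j)) :=
        (hcont.tendsto q).comp hφtend
      have l2 : Tendsto (fun n => A.mulVec (Y (ns (φ n + N))) i
          - A.mulVec (Y (ns (φ n + N))) j) atTop (nhds 0) :=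
        (htendsto0 i j).comp hT'
      have := tendsto_nhds_unique l1 l2
      linarith [this]
    have hqp : q = p := hpuniq q hqmem (fun k => lt_of_lt_of_le hε (hqε k)) hqeq
    exact ⟨fun n => φ n + N, hqp ▸ hφtend⟩
  intro i
  have := ((continuous_apply i).tendsto p).comp hYp
  simpa [hYdef, Function.comp_def] using this
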